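/- Let p be an odd prime and n a natural number. For each natural number l ≥ 1: A(p^{2l}; n) = p^{−1−l}(p−1) if p^{2l} divides n; A(p^{2l}; n) = −p^{−1−l} if p^{2l−1} exactly divides n; and A(p^{2l}; n) = 0 if p^{2l−1} does not divide n. -/

import Mathlib

open Finset

/-- `e z = exp(2 π i z)`. -/
noncomputable def e (z : ℝ) : ℂ := Complex.exp (2 * Real.pi * Complex.I * z)

/-- The quadratic Gauss sum `S(q,a) = ∑_{r=1}^{q} e(a r² / q)`. -/
noncomputable def S (q : ℕ) (a : ℤ) : ℂ :=
  ∑ r ∈ Finset.Icc 1 q, e ((a : ℝ) * (r : ℝ) ^ 2 / (q : ℝ))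

/-- `A(q;n) = ∑_{1 ≤ a ≤ q, gcd(a,q)=1} q⁻³ S(q,a)³ e(-n a / q)`. -/
noncomputable def A (q n : ℕ) : ℂ :=
  ∑ a ∈ (Finset.Icc 1 q).filter (fun a => Nat.gcd a q = 1),
    (q : ℂ) ^ (-(3 : ℤ)) * S q (a : ℤ) ^ 3 * e (-((n : ℝ) * (a : ℝ) / (q : ℝ)))

lemma e_add (x y : ℝ) : e (x + y) = e x * e y := by
  simp only [e]
  rw [← Complex.exp_add]
  ring_nf
  push_cast
  ring_nf

lemma e_zero : e 0 = 1 := by simp [e]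

lemma e_int (k : ℤ) : e k = 1 := by
  simp only [e]
  have : (2 : ℂ) * Real.pi * Complex.I * (k : ℝ) = (k : ℤ) * (2 * Real.pi * Complex.I) := by
    push_cast; ring
  rw [this, Complex.exp_int_mul_two_pi_mul_I]

lemma e_nat_mul (x : ℝ) (r : ℕ) : e (r * x) = e x ^ r := by
  simp only [e]
  rw [← Complex.exp_nat_mul]
  ring_nf
  push_cast
  ring_nf

lemma e_eq_one_iff (q : ℕ) (hq : 0 < q) (m : ℤ) :
    e ((m : ℝ) / q) = 1 ↔ (q : ℤ) ∣ m := by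
  have hq' : (q : ℝ) ≠ 0 := by exact_mod_cast hq.ne'
  constructor
  · intro h
    simp only [e, Complex.exp_eq_one_iff] at h
    obtain ⟨k, hk⟩ := h
    have hpi : (2 : ℂ) * Real.pi * Complex.I ≠ 0 := by
      simp [Real.pi_ne_zero, Complex.I_ne_zero]
    have hk' : (2 : ℂ) * Real.pi * Complex.I * (((m : ℝ) / q : ℝ) : ℂ)
        = (2 : ℂ) * Real.pi * Complex.I * (k : ℂ) := by rw [hk]; ring
    have h2 : (((m : ℝ) / q : ℝ) : ℂ) = (k : ℂ) := mul_left_cancel₀ hpi hk'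
    have hre : (m : ℝ) / q = (k : ℝ) := by exact_mod_cast h2
    have hm : (m : ℝ) = (q : ℝ) * (k : ℝ) := by
      rw [eq_comm, ← hre]; field_simp
    exact ⟨k, by exact_mod_cast hm⟩
  · rintro ⟨k, rfl⟩
    have h3 : (((q : ℤ) * k : ℤ) : ℝ) / q = ((k : ℤ) : ℝ) := by push_cast; field_simp
    rw [h3]
    exact e_int k

lemma sum_range_e (q : ℕ) (hq : 0 < q) (m : ℤ) :
    ∑ r ∈ Finset.range q, e ((m : ℝ) * r / q) = if (q : ℤ) ∣ m then (q : ℂ) else 0 := by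
  have hq' : (q : ℝ) ≠ 0 := by exact_mod_cast hq.ne'
  by_cases h : (q : ℤ) ∣ m
  · simp only [h, if_true]
    have : ∀ r ∈ Finset.range q, e ((m : ℝ) * r / q) = 1 := by
      intro r _
      obtain ⟨k, rfl⟩ := h
      have h4 : (((q : ℤ) * k : ℤ) : ℝ) * r / q = ((k * r : ℤ) : ℝ) := by
        push_cast; field_simp
      rw [h4]; exact e_int _
    rw [Finset.sum_congr rfl this]
    simp
  · simp only [h, if_false]
    have hterm : ∀ r : ℕ, e ((m : ℝ) * r / q) = e ((m : ℝ) / q) ^ r := by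
      intro r
      rw [← e_nat_mul]
      congr 1
      ring
    simp only [hterm]
    have hne : e ((m : ℝ) / q) ≠ 1 := fun hc => h ((e_eq_one_iff q hq m).1 hc)
    rw [geom_sum_eq hne]
    have h5 : e ((m : ℝ) / q) ^ q = 1 := by
      rw [← e_nat_mul]
      have : (q : ℝ) * ((m : ℝ) / q) = (m : ℝ) := by field_simp
      rw [this]; exact e_int m
    rw [h5]
    simp

lemma sum_Icc_eq_sum_range (q : ℕ) (f : ℕ → ℂ) (h : f q = f 0) :
    ∑ r ∈ Finset.Icc 1 q, f r = ∑ r ∈ Finset.range q, f r := by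
  have h1 : Finset.range (q + 1) = insert 0 (Finset.Icc 1 q) := by
    ext x
    simp only [Finset.mem_range, Finset.mem_insert, Finset.mem_Icc, Nat.lt_succ_iff]
    omega
  have h2 : ∑ r ∈ Finset.range (q + 1), f r = f 0 + ∑ r ∈ Finset.Icc 1 q, f r := by
    rw [h1, Finset.sum_insert (by simp)]
  rw [Finset.sum_range_succ, h] at h2
  linear_combination -h2

lemma e_nat (k : ℕ) : e k = 1 := by
  have := e_int (k : ℤ); simpa using this

lemma S_sq (P : ℕ) (hP : 0 < P) (a : ℕ) (hcop : Nat.Coprime P (2 * a)) :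
    S (P ^ 2) (a : ℤ) = (P : ℂ) := by
  have hP' : (P : ℝ) ≠ 0 := by exact_mod_cast hP.ne'
  rw [S]
  rw [sum_Icc_eq_sum_range _ _ (by
    push_cast
    have h1 : (a : ℝ) * ((P:ℝ)^2)^2 / (P:ℝ)^2 = ((a * P^2 : ℕ) : ℝ) := by
      push_cast; field_simp
    rw [h1, e_nat]
    simp [e_zero])]
  have hbij : ∑ r ∈ Finset.range (P ^ 2),
      e ((((a:ℕ):ℤ) : ℝ) * (r : ℝ) ^ 2 / ((P^2 : ℕ) : ℝ))
      = ∑ x ∈ Finset.range P ×ˢ Finset.range P,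
        e ((((a:ℕ):ℤ) : ℝ) * ((x.1 + P * x.2 : ℕ) : ℝ) ^ 2 / ((P^2 : ℕ) : ℝ)) := by
    apply Finset.sum_nbij' (fun r => (r % P, r / P)) (fun x => x.1 + P * x.2)
    · intro r hr
      simp only [Finset.mem_range] at hr
      simp only [Finset.mem_product, Finset.mem_range]
      constructor
      · exact Nat.mod_lt _ hP
      · exact Nat.div_lt_of_lt_mul (by rw [← pow_two]; exact hr)
    · intro x hx
      simp only [Finset.mem_product, Finset.mem_range] at hx
      simp only [Finset.mem_range, pow_two]
      have h1 := hx.1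
      have h2 := hx.2
      nlinarith [h1, h2]
    · intro r _
      simp [Nat.mod_add_div]
    · intro x hx
      simp only [Finset.mem_product, Finset.mem_range] at hx
      ext
      · simp [Nat.add_mul_mod_self_left, Nat.mod_eq_of_lt hx.1]
      · simp [Nat.add_mul_div_left _ _ hP, Nat.div_eq_of_lt hx.1]
    · intro r _
      rw [Nat.mod_add_div]
  rw [hbij, Finset.sum_product]
  have hterm : ∀ u v : ℕ,
      e ((((a:ℕ):ℤ) : ℝ) * ((u + P * v : ℕ) : ℝ) ^ 2 / ((P^2 : ℕ) : ℝ))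
      = e ((a : ℝ) * (u:ℝ)^2 / (P:ℝ)^2) * e ((((2*a*u : ℕ):ℤ) : ℝ) * (v:ℝ) / (P:ℝ)) := by
    intro u v
    have harg : (((a:ℕ):ℤ) : ℝ) * ((u + P * v : ℕ) : ℝ) ^ 2 / ((P^2 : ℕ) : ℝ)
        = ((a : ℝ) * (u:ℝ)^2 / (P:ℝ)^2 + (((2*a*u : ℕ):ℤ) : ℝ) * (v:ℝ) / (P:ℝ))
          + ((a * v^2 : ℕ) : ℝ) := by
      push_cast; field_simp; ring
    rw [harg, e_add, e_add, e_nat, mul_one]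
  simp only [hterm]
  have hinner : ∀ u ∈ Finset.range P,
      ∑ v ∈ Finset.range P, e ((a : ℝ) * (u:ℝ)^2 / (P:ℝ)^2)
        * e ((((2*a*u : ℕ):ℤ) : ℝ) * (v:ℝ) / (P:ℝ))
      = e ((a : ℝ) * (u:ℝ)^2 / (P:ℝ)^2) * (if u = 0 then (P:ℂ) else 0) := by
    intro u hu
    rw [← Finset.mul_sum, sum_range_e P hP ((2*a*u : ℕ) : ℤ)]
    congr 1
    by_cases h0 : u = 0
    · simp [h0]
    · simp only [h0, if_false]
      rw [if_neg]
      intro hdvd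
      have hdvd' : P ∣ 2 * a * u := by exact_mod_cast hdvd
      have : P ∣ u := hcop.dvd_of_dvd_mul_left hdvd'
      have := Nat.le_of_dvd (Nat.pos_of_ne_zero h0) this
      simp only [Finset.mem_range] at hu
      omega
  rw [Finset.sum_congr rfl hinner]
  simp only [mul_ite, mul_zero]
  rw [Finset.sum_ite_eq' (Finset.range P) 0]
  simp [Finset.mem_range.mpr hP, e_zero]

lemma ramanujan (p : ℕ) (hp : p.Prime) (k : ℕ) (hk : 1 ≤ k) (m : ℤ) :
    ∑ a ∈ (Finset.Icc 1 (p ^ k)).filter (fun a => Nat.gcd a (p ^ k) = 1),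
      e ((m : ℝ) * a / ((p ^ k : ℕ) : ℝ)) =
    (if ((p ^ k : ℕ) : ℤ) ∣ m then ((p ^ k : ℕ) : ℂ) else 0)
      - (if ((p ^ (k - 1) : ℕ) : ℤ) ∣ m then ((p ^ (k - 1) : ℕ) : ℂ) else 0) := by
  have hp1 : 1 < p := hp.one_lt
  have hq : 0 < p ^ k := pow_pos (by omega) k
  have hq1 : 0 < p ^ (k - 1) := pow_pos (by omega) _
  have hq' : ((p ^ k : ℕ) : ℝ) ≠ 0 := by exact_mod_cast hq.ne'
  set f : ℕ → ℂ := fun a => e ((m : ℝ) * a / ((p ^ k : ℕ) : ℝ)) with hf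
  -- filter condition
  have hcond : ∀ a, (Nat.gcd a (p ^ k) = 1) ↔ ¬ p ∣ a := by
    intro a
    show Nat.Coprime a (p ^ k) ↔ ¬ p ∣ a
    rw [Nat.coprime_pow_right_iff (by omega : 0 < k), Nat.coprime_comm]
    exact hp.coprime_iff_not_dvd
  have hsplit : ∑ a ∈ (Finset.Icc 1 (p ^ k)).filter (fun a => p ∣ a), f a
      + ∑ a ∈ (Finset.Icc 1 (p ^ k)).filter (fun a => Nat.gcd a (p ^ k) = 1), f a
      = ∑ a ∈ Finset.Icc 1 (p ^ k), f a := by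
    rw [Finset.filter_congr (fun a _ => by
      rw [hcond a] : ∀ a ∈ Finset.Icc 1 (p^k),
        (Nat.gcd a (p ^ k) = 1) ↔ ¬ p ∣ a)]
    exact Finset.sum_filter_add_sum_filter_not _ _ _
  -- total sum
  have htot : ∑ a ∈ Finset.Icc 1 (p ^ k), f a
      = if ((p ^ k : ℕ) : ℤ) ∣ m then ((p ^ k : ℕ) : ℂ) else 0 := by
    rw [sum_Icc_eq_sum_range _ _ (by
      simp only [hf]
      have : (m : ℝ) * (p ^ k : ℕ) / ((p ^ k : ℕ) : ℝ) = (m : ℝ) := by field_simp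
      rw [this]
      have := e_int m
      simp [this, e_zero])]
    exact sum_range_e _ hq m
  -- divisible part
  have hdivsum : ∑ a ∈ (Finset.Icc 1 (p ^ k)).filter (fun a => p ∣ a), f a
      = if ((p ^ (k - 1) : ℕ) : ℤ) ∣ m then ((p ^ (k - 1) : ℕ) : ℂ) else 0 := by
    have hbij : ∑ a ∈ (Finset.Icc 1 (p ^ k)).filter (fun a => p ∣ a), f a
        = ∑ b ∈ Finset.Icc 1 (p ^ (k - 1)), e ((m : ℝ) * b / ((p ^ (k-1) : ℕ) : ℝ)) := by
      apply Finset.sum_nbij' (fun a => a / p) (fun b => p * b)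
      · intro a ha
        simp only [Finset.mem_filter, Finset.mem_Icc] at ha
        obtain ⟨⟨h1, h2⟩, hd⟩ := ha
        simp only [Finset.mem_Icc]
        constructor
        · exact Nat.one_le_div_iff (by omega) |>.2 (Nat.le_of_dvd (by omega) hd)
        · apply Nat.div_le_of_le_mul
          calc a ≤ p ^ k := h2
            _ = p * p ^ (k - 1) := by
                rw [← pow_succ']
                congr 1
                omega
      · intro b hb
        simp only [Finset.mem_Icc] at hb
        simp only [Finset.mem_filter, Finset.mem_Icc]
        refine ⟨⟨by nlinarith [hb.1], ?_⟩, Dvd.intro _ rfl⟩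
        calc p * b ≤ p * p ^ (k - 1) := Nat.mul_le_mul_left _ hb.2
          _ = p ^ k := by rw [← pow_succ']; congr 1; omega
      · intro a ha
        simp only [Finset.mem_filter] at ha
        exact Nat.mul_div_cancel' ha.2
      · intro b _
        exact Nat.mul_div_cancel_left _ (by omega)
      · intro a ha
        simp only [Finset.mem_filter, Finset.mem_Icc] at ha
        obtain ⟨⟨h1, h2⟩, hd⟩ := ha
        simp only [hf]
        congr 1
        obtain ⟨c, rfl⟩ := hd
        rw [Nat.mul_div_cancel_left _ (by omega : 0 < p)]
        have hpk : (p : ℝ) ^ k = (p : ℝ) * (p : ℝ) ^ (k - 1) := by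
          rw [← pow_succ']; congr 1; omega
        push_cast [hpk]
        have hpr : (p : ℝ) ≠ 0 := by positivity
        have hpr1 : (p : ℝ) ^ (k - 1) ≠ 0 := by positivity
        field_simp
    rw [hbij]
    rw [sum_Icc_eq_sum_range _ _ (by
      have : (m : ℝ) * (p ^ (k-1) : ℕ) / ((p ^ (k-1) : ℕ) : ℝ) = (m : ℝ) := by
        have : ((p ^ (k-1) : ℕ) : ℝ) ≠ 0 := by exact_mod_cast hq1.ne'
        field_simp
      rw [this]
      have := e_int m
      simp [this, e_zero])]
    exact sum_range_e _ hq1 m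
  have := hsplit
  rw [htot, hdivsum] at this
  linear_combination this

theorem A_even_prime_power (p : ℕ) (hp : p.Prime) (hodd : Odd p) (n : ℕ)
    (l : ℕ) (hl : 1 ≤ l) :
    (p ^ (2 * l) ∣ n → A (p ^ (2 * l)) n = (p : ℂ) ^ (-1 - (l : ℤ)) * ((p : ℂ) - 1)) ∧
    ((p ^ (2 * l - 1) ∣ n ∧ ¬ p ^ (2 * l) ∣ n) →
      A (p ^ (2 * l)) n = -(p : ℂ) ^ (-1 - (l : ℤ))) ∧
    (¬ p ^ (2 * l - 1) ∣ n → A (p ^ (2 * l)) n = 0) := by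
  have hp1 : 1 < p := hp.one_lt
  have hppos : 0 < p := by omega
  have hx : (p : ℂ) ≠ 0 := by exact_mod_cast hppos.ne'
  have hq : 0 < p ^ (2 * l) := pow_pos hppos _
  have hp2 : ¬ p ∣ 2 := by
    intro h
    have := (Nat.prime_dvd_prime_iff_eq hp Nat.prime_two).1 h
    rcases hodd with ⟨t, ht⟩
    omega
  -- Gauss sum value on the coprime range
  have hS : ∀ a ∈ (Finset.Icc 1 (p ^ (2 * l))).filter
      (fun a => Nat.gcd a (p ^ (2 * l)) = 1), S (p ^ (2 * l)) (a : ℤ) = (p : ℂ) ^ l := by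
    intro a ha
    simp only [Finset.mem_filter] at ha
    have hpa : ¬ p ∣ a := by
      intro hd
      have h1 : p ∣ Nat.gcd a (p ^ (2 * l)) :=
        Nat.dvd_gcd hd (dvd_pow_self p (by omega))
      rw [ha.2] at h1
      have := Nat.le_of_dvd one_pos h1
      omega
    have hcop : Nat.Coprime (p ^ l) (2 * a) := by
      apply Nat.Coprime.pow_left
      exact Nat.Coprime.mul_right (hp.coprime_iff_not_dvd.mpr hp2)
        (hp.coprime_iff_not_dvd.mpr hpa)
    have hq2 : p ^ (2 * l) = (p ^ l) ^ 2 := by rw [← pow_mul, mul_comm]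
    rw [hq2, S_sq (p ^ l) (pow_pos hppos _) a hcop]
    push_cast
    ring
  -- A as constant times Ramanujan sum
  have hA : A (p ^ (2 * l)) n
      = (((p ^ (2 * l) : ℕ) : ℂ) ^ (-(3 : ℤ)) * ((p : ℂ) ^ l) ^ 3)
        * ∑ a ∈ (Finset.Icc 1 (p ^ (2 * l))).filter
            (fun a => Nat.gcd a (p ^ (2 * l)) = 1),
          e (((-(n : ℤ) : ℤ) : ℝ) * a / ((p ^ (2 * l) : ℕ) : ℝ)) := by
    rw [A, Finset.mul_sum]
    apply Finset.sum_congr rfl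
    intro a ha
    rw [hS a ha]
    have harg : -((n : ℝ) * a / ((p ^ (2 * l) : ℕ) : ℝ))
        = ((-(n : ℤ) : ℤ) : ℝ) * a / ((p ^ (2 * l) : ℕ) : ℝ) := by push_cast; ring
    rw [harg]
  rw [ramanujan p hp (2 * l) (by omega) (-(n : ℤ))] at hA
  have hd1 : (((p ^ (2 * l) : ℕ)) : ℤ) ∣ (-(n : ℤ)) ↔ p ^ (2 * l) ∣ n := by
    rw [dvd_neg, Int.natCast_dvd_natCast]
  have hd2 : (((p ^ (2 * l - 1) : ℕ)) : ℤ) ∣ (-(n : ℤ)) ↔ p ^ (2 * l - 1) ∣ n := by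
    rw [dvd_neg, Int.natCast_dvd_natCast]
  -- constant simplification
  have hC : (((p ^ (2 * l) : ℕ) : ℂ) ^ (-(3 : ℤ)) * ((p : ℂ) ^ l) ^ 3)
      = (p : ℂ) ^ (-(3 * (l : ℤ))) := by
    have h1 : ((p ^ (2 * l) : ℕ) : ℂ) = (p : ℂ) ^ (2 * l) := by push_cast; ring
    rw [h1, ← zpow_natCast (p : ℂ) (2 * l), ← zpow_mul, ← pow_mul,
      ← zpow_natCast (p : ℂ) (l * 3), ← zpow_add₀ hx]
    congr 1
    push_cast
    ring
  rw [hC] at hA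
  have hkey : ∀ j : ℕ, j = 2 * l - 1 ∨ j = 2 * l →
      (p : ℂ) ^ (-(3 * (l : ℤ))) * ((p : ℂ) ^ j) = (p : ℂ) ^ ((j : ℤ) - 3 * l) := by
    intro j _
    rw [← zpow_natCast (p : ℂ) j, ← zpow_add₀ hx]
    congr 1
    ring
  refine ⟨?_, ?_, ?_⟩
  · intro h1
    have h2 : p ^ (2 * l - 1) ∣ n := dvd_trans (pow_dvd_pow p (by omega)) h1
    rw [hA, if_pos (hd1.mpr h1), if_pos (hd2.mpr h2)]
    have e1 : ((p ^ (2 * l) : ℕ) : ℂ) = (p : ℂ) ^ (2 * l - 1) * (p : ℂ) := by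
      push_cast
      rw [← pow_succ]
      congr 1
      omega
    have e2 : ((p ^ (2 * l - 1) : ℕ) : ℂ) = (p : ℂ) ^ (2 * l - 1) := by push_cast; ring
    rw [e1, e2]
    have e3 : (p : ℂ) ^ (-(3 * (l : ℤ))) * ((p : ℂ) ^ (2 * l - 1) * (p : ℂ)
        - (p : ℂ) ^ (2 * l - 1))
        = ((p : ℂ) ^ (-(3 * (l : ℤ))) * (p : ℂ) ^ (2 * l - 1)) * ((p : ℂ) - 1) := by ring
    rw [e3, hkey (2 * l - 1) (Or.inl rfl)]
    congr 2
    push_cast [Nat.cast_sub (by omega : 1 ≤ 2 * l)]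
    ring
  · rintro ⟨h2, h1⟩
    rw [hA, if_neg (fun hc => h1 (hd1.mp hc)), if_pos (hd2.mpr h2)]
    have e2 : ((p ^ (2 * l - 1) : ℕ) : ℂ) = (p : ℂ) ^ (2 * l - 1) := by push_cast; ring
    rw [e2]
    have e3 : (p : ℂ) ^ (-(3 * (l : ℤ))) * (0 - (p : ℂ) ^ (2 * l - 1))
        = -((p : ℂ) ^ (-(3 * (l : ℤ))) * (p : ℂ) ^ (2 * l - 1)) := by ring
    rw [e3, hkey (2 * l - 1) (Or.inl rfl)]
    congr 2
    push_cast [Nat.cast_sub (by omega : 1 ≤ 2 * l)]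
    ring
  · intro h2
    have h1 : ¬ p ^ (2 * l) ∣ n := fun hc =>
      h2 (dvd_trans (pow_dvd_pow p (by omega)) hc)
    rw [hA, if_neg (fun hc => h1 (hd1.mp hc)), if_neg (fun hc => h2 (hd2.mp hc))]
    ring
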